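/- Let Y be a GGamma(1/(p-1), p/(p-1)) random variable for p ≥ 2, and let μ = E[Y] = 1/Γ(1/p). Then Y is sub-gamma to the right with variance parameter μ and scale parameter 1: for all λ ∈ (0, 1), E[exp(λ(Y - μ))] ≤ exp(λ²μ / (2(1 - λ))). -/

import Mathlib

open MeasureTheory Set
open scoped ENNReal

/-- The Generalized Gamma distribution `GGamma(a, b)`, with density
`b * x^(a-1) * exp (-x^b) / Γ(a/b)` on `(0, ∞)`. -/
noncomputable def gGammaMeasure (a b : ℝ) : Measure ℝ :=
  (volume.restrict (Ioi (0:ℝ))).withDensity fun x =>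
    ENNReal.ofReal (b * x ^ (a - 1) * Real.exp (-x ^ b) / Real.Gamma (a / b))

/-- Gamma is bounded by `(k-1)!` on `[1, k]`, by convexity. -/
lemma gamma_le_factorial_aux (k : ℕ) (hk : 1 ≤ k) {x : ℝ} (h1 : 1 ≤ x) (h2 : x ≤ k) :
    Real.Gamma x ≤ ((k - 1).factorial : ℝ) := by
  have hconv := Real.convexOn_Gamma
  have h1m : (1 : ℝ) ∈ Ioi (0:ℝ) := by norm_num
  have hkm : ((k : ℝ)) ∈ Ioi (0:ℝ) := by
    simp only [mem_Ioi]; exact_mod_cast Nat.pos_of_ne_zero (by omega)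
  have hseg : x ∈ segment ℝ (1:ℝ) (k:ℝ) := by
    rw [segment_eq_Icc (by exact_mod_cast le_trans h1 h2)]
    exact ⟨h1, h2⟩
  have hmax := hconv.le_on_segment h1m hkm hseg
  have hΓ1 : Real.Gamma 1 = 1 := Real.Gamma_one
  have hΓk : Real.Gamma (k:ℝ) = ((k - 1).factorial : ℝ) := by
    obtain ⟨m, rfl⟩ : ∃ m, k = m + 1 := ⟨k - 1, by omega⟩
    rw [show ((m + 1 : ℕ) : ℝ) = (m : ℝ) + 1 by push_cast; ring, Real.Gamma_nat_eq_factorial]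
    norm_num
  have hfac : (1 : ℝ) ≤ ((k - 1).factorial : ℝ) := by exact_mod_cast Nat.one_le_iff_ne_zero.2 (k-1).factorial_ne_zero
  calc Real.Gamma x ≤ max (Real.Gamma 1) (Real.Gamma k) := hmax
    _ = ((k - 1).factorial : ℝ) := by rw [hΓ1, hΓk, max_eq_right hfac]

set_option maxHeartbeats 1600000 in
theorem stmt_11 (p : ℝ) (hp : 2 ≤ p) (lam : ℝ) (h0 : 0 < lam) (h1 : lam < 1) :
    ∫ y, Real.exp (lam * (y - 1 / Real.Gamma (1 / p)))
        ∂(gGammaMeasure (1 / (p - 1)) (p / (p - 1))) ≤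
      Real.exp (lam ^ 2 * (1 / Real.Gamma (1 / p)) / (2 * (1 - lam))) := by
  have hq : (0:ℝ) < p - 1 := by linarith
  have hp0 : (0:ℝ) < p := by linarith
  set a : ℝ := 1 / (p - 1) with ha_def
  set b : ℝ := p / (p - 1) with hb_def
  have ha0 : 0 < a := by positivity
  have hb0 : 0 < b := by positivity
  have hb1 : 1 ≤ b := by
    rw [hb_def, le_div_iff₀ hq]; linarith
  have hba : b - a = 1 := by
    rw [hb_def, ha_def]; field_simp
  have hab : a / b = 1 / p := by
    rw [ha_def, hb_def]; field_simp
  have hG : 0 < Real.Gamma (1 / p) := Real.Gamma_pos_of_pos (by positivity)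
  set G : ℝ := Real.Gamma (1 / p) with hG_def
  set μ : ℝ := 1 / G with hμ_def
  have hμ0 : 0 < μ := by positivity
  set ν : Measure ℝ := gGammaMeasure a b with hν_def
  have h1l : (0:ℝ) < 1 - lam := by linarith
  -- the density function
  set dens : ℝ → ℝ≥0∞ := fun x =>
    ENNReal.ofReal (b * x ^ (a - 1) * Real.exp (-x ^ b) / Real.Gamma (a / b)) with hdens_def
  have hdens_meas : Measurable dens := by
    apply ENNReal.measurable_ofReal.comp
    fun_prop
  -- step 1 : factor the exponential
  have hfac : ∀ y : ℝ, Real.exp (lam * (y - μ)) = Real.exp (-(lam * μ)) * Real.exp (lam * y) := by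
    intro y; rw [← Real.exp_add]; ring_nf
  -- the real-valued k-th term of the series
  set h : ℕ → ℝ → ℝ := fun k x =>
    lam ^ k / ((k).factorial * G) * b * (x ^ ((k : ℝ) + a - 1) * Real.exp (-x ^ b)) with hh_def
  -- the bounding sequence
  set r : ℕ → ℝ := fun k => if k = 0 then 1 else if k = 1 then lam * μ else μ / 2 * lam ^ k
    with hr_def
  have hr_nonneg : ∀ k, 0 ≤ r k := by
    intro k
    simp only [hr_def]
    split_ifs <;> positivity
  have hr_le : ∀ k, r k ≤ (1 + μ) * lam ^ k := by
    intro k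
    simp only [hr_def]
    split_ifs with hk0 hk1
    · subst hk0; simp; linarith
    · subst hk1; nlinarith
    · nlinarith [pow_pos h0 k, pow_nonneg h0.le k]
  have hr_summable : Summable r :=
    Summable.of_nonneg_of_le hr_nonneg hr_le
      ((summable_geometric_of_lt_one h0.le h1).mul_left _)
  have hr_sum : ∑' k, r k = 1 + lam * μ + μ / 2 * lam ^ 2 * (1 - lam)⁻¹ := by
    rw [Summable.tsum_eq_zero_add hr_summable, Summable.tsum_eq_zero_add (by
      exact (summable_nat_add_iff 1).2 hr_summable)]
    have e0 : r 0 = 1 := by simp [hr_def]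
    have e1 : r (0 + 1) = lam * μ := by simp [hr_def]
    have e2 : ∀ k : ℕ, r (k + 1 + 1) = μ / 2 * lam ^ 2 * lam ^ k := by
      intro k
      simp only [hr_def, if_neg (by omega : ¬ k + 1 + 1 = 0), if_neg (by omega : ¬ k + 1 + 1 = 1)]
      ring
    rw [e0, e1]
    simp_rw [e2]
    rw [tsum_mul_left, tsum_geometric_of_lt_one h0.le h1]
    ring
  -- value of the k-th moment integral
  have hmoment : ∀ k : ℕ, ∫ x in Ioi (0:ℝ), h k x
      = lam ^ k / ((k).factorial * G) * Real.Gamma (((k : ℝ) + a) / b) := by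
    intro k
    simp only [hh_def]
    rw [integral_const_mul, integral_rpow_mul_exp_neg_rpow hb0 (by push_cast; linarith [Nat.cast_nonneg (α := ℝ) k] : (-1:ℝ) < (k : ℝ) + a - 1)]
    have : (k : ℝ) + a - 1 + 1 = (k : ℝ) + a := by ring
    rw [this]
    field_simp
  -- integrability of the k-th term
  have hint : ∀ k : ℕ, IntegrableOn (h k) (Ioi 0) := by
    intro k
    simp only [hh_def]
    apply Integrable.const_mul
    exact integrableOn_rpow_mul_exp_neg_rpow (by push_cast; linarith [Nat.cast_nonneg (α := ℝ) k]) hb0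
  -- nonnegativity of h k on Ioi 0
  have hpos : ∀ k : ℕ, ∀ x ∈ Ioi (0:ℝ), 0 ≤ h k x := by
    intro k x hx
    simp only [hh_def]
    have hx0 : 0 < x := hx
    positivity
  -- the term-wise bound : real integral value ≤ r k
  have hterm_le : ∀ k : ℕ,
      lam ^ k / ((k).factorial * G) * Real.Gamma (((k : ℝ) + a) / b) ≤ r k := by
    intro k
    match k with
    | 0 =>
      have : ((0 : ℕ) : ℝ) + a = a := by push_cast; ring
      rw [this, hab, ← hG_def]
      simp [hr_def, hG.ne']
    | 1 =>
      have : (((1 : ℕ) : ℝ) + a) / b = 1 := by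
        push_cast
        rw [div_eq_one_iff_eq hb0.ne']
        linarith
      rw [this, Real.Gamma_one]
      simp only [hr_def, if_neg one_ne_zero]
      simp [hμ_def]
      rw [div_le_iff₀ hG]
      field_simp
      exact le_rfl
    | (m + 2) =>
      set k := m + 2 with hk_def
      have hk2 : 2 ≤ k := by omega
      have hx1 : (1:ℝ) ≤ ((k : ℝ) + a) / b := by
        rw [le_div_iff₀ hb0]
        have : (1:ℝ) ≤ (k : ℝ) := by exact_mod_cast (by omega : 1 ≤ k)
        linarith
      have hxk : ((k : ℝ) + a) / b ≤ (k : ℝ) := by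
        rw [div_le_iff₀ hb0]
        have hkr : (1:ℝ) ≤ (k : ℝ) := by exact_mod_cast (by omega : 1 ≤ k)
        have hab1 : b = 1 + a := by linarith
        rw [hab1]
        nlinarith
      have hgam := gamma_le_factorial_aux k (by omega) hx1 hxk
      have hkm : k - 1 = m + 1 := by omega
      have hfact : ((k - 1).factorial : ℝ) * k = (k.factorial : ℝ) := by
        rw [hkm]
        have : (m + 1).factorial * (m + 2) = (m + 2).factorial := by
          rw [Nat.factorial_succ (m + 1)]; ring
        exact_mod_cast this
      have hrk : r k = μ / 2 * lam ^ k := by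
        simp only [hr_def, if_neg (by omega : ¬ k = 0), if_neg (by omega : ¬ k = 1)]
      rw [hrk]
      have hlp : 0 < lam ^ k := pow_pos h0 k
      have hkf : (0:ℝ) < (k.factorial : ℝ) := by exact_mod_cast k.factorial_pos
      calc lam ^ k / ((k).factorial * G) * Real.Gamma (((k : ℝ) + a) / b)
          ≤ lam ^ k / ((k).factorial * G) * ((k - 1).factorial : ℝ) := by
            apply mul_le_mul_of_nonneg_left hgam (by positivity)
        _ ≤ μ / 2 * lam ^ k := by
            rw [div_mul_eq_mul_div, div_le_iff₀ (by positivity)]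
            have h2k : (2:ℝ) ≤ (k:ℝ) := by exact_mod_cast hk2
            have hf2 : ((k-1).factorial : ℝ) * 2 ≤ (k.factorial : ℝ) := by
              nlinarith [(k-1).factorial_pos, hfact,
                (by exact_mod_cast (k-1).factorial_pos : (0:ℝ) < ((k-1).factorial : ℝ))]
            calc lam ^ k * ((k-1).factorial : ℝ) ≤ lam ^ k * ((k.factorial : ℝ) / 2) := by
                  apply mul_le_mul_of_nonneg_left _ hlp.le
                  linarith
              _ = μ / 2 * lam ^ k * ((k).factorial * G) := by
                  have hμG : μ * G = 1 := by
                    rw [hμ_def, one_div_mul_cancel hG.ne']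
                  calc lam ^ k * ((k.factorial : ℝ) / 2)
                      = (μ * G) * (lam ^ k * ((k.factorial : ℝ) / 2)) := by
                        rw [hμG, one_mul]
                    _ = μ / 2 * lam ^ k * ((k).factorial * G) := by ring
  -- the lintegral of exp (lam * y)
  have hmeasf : Measurable fun y : ℝ => ENNReal.ofReal (Real.exp (lam * y)) := by
    apply ENNReal.measurable_ofReal.comp; fun_prop
  have hL_eq : ∫⁻ y, ENNReal.ofReal (Real.exp (lam * y)) ∂ν
      = ∫⁻ x in Ioi (0:ℝ), ∑' k, ENNReal.ofReal (h k x) := by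
    rw [hν_def]
    unfold gGammaMeasure
    rw [lintegral_withDensity_eq_lintegral_mul _ hdens_meas hmeasf]
    apply setLIntegral_congr_fun measurableSet_Ioi
    intro x hx
    have hx0 : 0 < x := hx
    have hexp : Real.exp (lam * x) = ∑' k : ℕ, (lam * x) ^ k / (k).factorial := by
      rw [Real.exp_eq_exp_ℝ, NormedSpace.exp_eq_tsum_div]
    have hdnn : 0 ≤ b * x ^ (a - 1) * Real.exp (-x ^ b) / Real.Gamma (a / b) := by
      rw [hab]; positivity
    simp only [Pi.mul_apply]
    rw [hexp, ENNReal.ofReal_tsum_of_nonneg (fun k => by positivity)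
      (by simpa [div_eq_mul_inv] using (Real.summable_pow_div_factorial (lam * x))),
      ← ENNReal.tsum_mul_left]
    refine tsum_congr fun k => ?_
    simp only [hdens_def]
    rw [← ENNReal.ofReal_mul hdnn]
    congr 1
    have hxpow : x ^ ((k:ℝ) + a - 1) = x ^ (k:ℕ) * x ^ (a - 1) := by
      rw [← Real.rpow_natCast x k, ← Real.rpow_add hx0]
      ring_nf
    simp only [hh_def]
    rw [hxpow, hab, ← hG_def, mul_pow]
    field_simp
  have hL_le : ∫⁻ y, ENNReal.ofReal (Real.exp (lam * y)) ∂ν ≤ ENNReal.ofReal (∑' k, r k) := by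
    have hmeas_hk : ∀ k : ℕ, Measurable (h k) := by
      intro k; simp only [hh_def]; fun_prop
    rw [hL_eq, lintegral_tsum (fun k => ((hmeas_hk k).ennreal_ofReal).aemeasurable)]
    rw [ENNReal.ofReal_tsum_of_nonneg hr_nonneg hr_summable]
    apply ENNReal.tsum_le_tsum
    intro k
    rw [← ofReal_integral_eq_lintegral_ofReal (hint k)
      ((ae_restrict_iff' measurableSet_Ioi).2 (Filter.Eventually.of_forall (hpos k)))]
    exact ENNReal.ofReal_le_ofReal ((hmoment k) ▸ hterm_le k)
  -- from lintegral bound to integral bound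
  have hR_nonneg : (0:ℝ) ≤ ∑' k, r k := tsum_nonneg hr_nonneg
  have hI_le : ∫ y, Real.exp (lam * y) ∂ν ≤ ∑' k, r k := by
    rw [integral_eq_lintegral_of_nonneg_ae
      (Filter.Eventually.of_forall fun y => (Real.exp_pos _).le)
      ((by fun_prop : Measurable fun y : ℝ => Real.exp (lam * y)).aestronglyMeasurable)]
    exact ENNReal.toReal_le_of_le_ofReal hR_nonneg hL_le
  -- final computation
  calc ∫ y, Real.exp (lam * (y - μ)) ∂ν
      = Real.exp (-(lam * μ)) * ∫ y, Real.exp (lam * y) ∂ν := by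
        simp_rw [hfac]; rw [integral_const_mul]
    _ ≤ Real.exp (-(lam * μ)) * ∑' k, r k := by
        apply mul_le_mul_of_nonneg_left hI_le (Real.exp_pos _).le
    _ ≤ Real.exp (-(lam * μ)) * Real.exp (lam * μ + μ / 2 * lam ^ 2 * (1 - lam)⁻¹) := by
        apply mul_le_mul_of_nonneg_left _ (Real.exp_pos _).le
        rw [hr_sum]
        have := Real.add_one_le_exp (lam * μ + μ / 2 * lam ^ 2 * (1 - lam)⁻¹)
        linarith
    _ = Real.exp (μ / 2 * lam ^ 2 * (1 - lam)⁻¹) := by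
        rw [← Real.exp_add]; ring_nf
    _ = Real.exp (lam ^ 2 * μ / (2 * (1 - lam))) := by
        congr 1
        field_simp
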